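/- Per-node energy capture (Theorem 2): under the adapted sampling scheme p_i = ‖T_i g‖₂²/‖g(λ)‖₂² with M i.i.d. samples, for any fixed node i and δ ∈ (0,1), if M ≥ (2a/δ²)(1 + δ/3) log(k/ε) where a = ‖g(λ)‖₂² ‖g(λ)‖∞² ‖U_k* δ_i‖₂⁴ / ‖T_i g‖₂⁴, then with probability at least 1 − ε: (1/M)‖M P^{−1/2} T_i g‖₂² / ‖T_i g‖₂² ≥ 1 − δ. -/

import Mathlib

/-- Localization of a kernel `g` at vertex `i`. -/
noncomputable def Tloc {N : ℕ} (U : Matrix (Fin N) (Fin N) ℝ) (lam : Fin N → ℝ)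
    (g : ℝ → ℝ) (i : Fin N) : Fin N → ℝ :=
  fun n => ∑ ℓ, g (lam ℓ) * U i ℓ * U n ℓ

open scoped Classical

/-- `exp (-x) ≤ 1 - x + x²/2` for `x ≥ 0`. -/
lemma exp_neg_le_quadratic (x : ℝ) (hx : 0 ≤ x) : Real.exp (-x) ≤ 1 - x + x^2/2 := by
  have h1 : 1 + x + x^2/2 ≤ Real.exp x := by
    have := Real.sum_le_exp_of_nonneg hx 3
    simp [Finset.sum_range_succ, Nat.factorial] at this
    nlinarith
  have h2 : (0:ℝ) < 1 + x + x^2/2 := by nlinarith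
  rw [Real.exp_neg]
  refine (inv_anti₀ h2 h1).trans ?_
  rw [inv_le_iff_one_le_mul₀ h2]
  nlinarith

/-- Sum over all maps of a product equals power of the sum. -/
lemma sum_prod_pi_eq_pow (n M : ℕ) (h : Fin n → ℝ) :
    ∑ ω : Fin M → Fin n, ∏ j, h (ω j) = (∑ m, h m)^M := by
  rw [← Fin.prod_const M (∑ m, h m), Finset.prod_univ_sum, Fintype.piFinset_univ]

/-- Spectral identity: energy of the localized kernel. -/
lemma Tloc_sq_sum {N : ℕ} (U : Matrix (Fin N) (Fin N) ℝ) (lam : Fin N → ℝ)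
    (g : ℝ → ℝ) (hU : U.transpose * U = 1) (n : Fin N) :
    ∑ m, (Tloc U lam g n m) ^ 2 = ∑ ℓ, (g (lam ℓ))^2 * (U n ℓ)^2 := by
  have horth : ∀ ℓ ℓ' : Fin N, ∑ m, U m ℓ * U m ℓ' = if ℓ = ℓ' then 1 else 0 := by
    intro ℓ ℓ'
    have := congrFun (congrFun hU ℓ) ℓ'
    simpa [Matrix.mul_apply, Matrix.transpose_apply, Matrix.one_apply] using this
  have e1 : ∀ m, (Tloc U lam g n m)^2
      = ∑ ℓ, ∑ ℓ', (g (lam ℓ) * U n ℓ * (g (lam ℓ') * U n ℓ')) * (U m ℓ * U m ℓ') := by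
    intro m
    rw [Tloc, sq, Finset.sum_mul_sum]
    exact Finset.sum_congr rfl fun ℓ _ => Finset.sum_congr rfl fun ℓ' _ => by ring
  rw [Finset.sum_congr rfl fun m _ => e1 m, Finset.sum_comm]
  refine Finset.sum_congr rfl fun ℓ _ => ?_
  rw [Finset.sum_comm]
  have e2 : ∀ ℓ' : Fin N, (∑ m, (g (lam ℓ) * U n ℓ * (g (lam ℓ') * U n ℓ')) * (U m ℓ * U m ℓ'))
      = (g (lam ℓ) * U n ℓ * (g (lam ℓ') * U n ℓ')) * (if ℓ = ℓ' then 1 else 0) := by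
    intro ℓ'
    rw [← Finset.mul_sum, horth]
  rw [Finset.sum_congr rfl fun ℓ' _ => e2 ℓ']
  simp only [mul_ite, mul_one, mul_zero]
  rw [Finset.sum_ite_eq Finset.univ ℓ]
  simp [sq]; ring

set_option maxHeartbeats 2000000 in
/-- Per-node energy capture (Theorem 2): under the adapted sampling scheme
`p_i = ‖T_i g‖₂²/‖g(λ)‖₂²` with `M` i.i.d. samples, for a fixed node `i` and
`δ ∈ (0,1)`, if `M ≥ (2a/δ²)(1 + δ/3) log(k/ε)` with
`a = ‖g(λ)‖₂² ‖g(λ)‖∞² ‖U_k* δ_i‖₂⁴ / ‖T_i g‖₂⁴`, then with probability at least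
`1 − ε` (over the draw `ω` with product weights `Π_j p_{ω_j}`):
`(1/M)‖MP^{−1/2}T_i g‖₂² / ‖T_i g‖₂² ≥ 1 − δ`. -/
theorem per_node_energy_capture {N : ℕ} (hN : 0 < N)
    (U : Matrix (Fin N) (Fin N) ℝ) (lam : Fin N → ℝ)
    (hU : U.transpose * U = 1) (hU' : U * U.transpose = 1)
    (g : ℝ → ℝ) (Ksupp : Finset (Fin N)) (hK : ∀ ℓ, ℓ ∈ Ksupp ↔ g (lam ℓ) ≠ 0)
    (p : Fin N → ℝ) (hp : ∀ n, 0 < p n)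
    (hpdef : ∀ n, p n = (∑ m, (Tloc U lam g n m) ^ 2) / (∑ ℓ, (g (lam ℓ)) ^ 2))
    (i : Fin N) (M : ℕ) (δ ε : ℝ) (hδ : 0 < δ) (hδ1 : δ < 1) (hε : 0 < ε)
    (hM : (M : ℝ) ≥ 2 / δ ^ 2
        * ((∑ ℓ, (g (lam ℓ)) ^ 2) * (⨆ ℓ : Fin N, (g (lam ℓ)) ^ 2)
            * (∑ ℓ ∈ Ksupp, (U i ℓ) ^ 2) ^ 2
          / (∑ m, (Tloc U lam g i m) ^ 2) ^ 2)
        * (1 + δ / 3) * Real.log (Ksupp.card / ε)) :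
    1 - ε ≤ ∑ ω : Fin M → Fin N,
      if ((1 / (M : ℝ)) * ∑ j, (Tloc U lam g i (ω j)) ^ 2 / p (ω j))
            / (∑ m, (Tloc U lam g i m) ^ 2) ≥ 1 - δ
        then ∏ j, p (ω j) else 0 := by
  -- trivial case ε ≥ 1
  by_cases hε1 : 1 ≤ ε
  · have h0 : (0:ℝ) ≤ ∑ ω : Fin M → Fin N,
        if ((1 / (M : ℝ)) * ∑ j, (Tloc U lam g i (ω j)) ^ 2 / p (ω j))
              / (∑ m, (Tloc U lam g i m) ^ 2) ≥ 1 - δ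
          then ∏ j, p (ω j) else 0 := by
      refine Finset.sum_nonneg fun ω _ => ?_
      split_ifs
      · exact Finset.prod_nonneg fun j _ => (hp (ω j)).le
      · exact le_refl 0
    linarith
  push_neg at hε1
  -- notation
  set G2 : ℝ := ∑ ℓ, (g (lam ℓ)) ^ 2 with hG2
  set T : ℝ := ∑ m, (Tloc U lam g i m) ^ 2 with hT
  set S : ℝ := ∑ ℓ ∈ Ksupp, (U i ℓ) ^ 2 with hS
  set Gs : ℝ := ⨆ ℓ : Fin N, (g (lam ℓ)) ^ 2 with hGs
  have hTeq : ∀ n, (∑ m, (Tloc U lam g n m) ^ 2) = ∑ ℓ, (g (lam ℓ))^2 * (U n ℓ)^2 :=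
    fun n => Tloc_sq_sum U lam g hU n
  have hG2nonneg : 0 ≤ G2 := Finset.sum_nonneg fun ℓ _ => sq_nonneg _
  have hG2pos : 0 < G2 := by
    rcases eq_or_lt_of_le hG2nonneg with h | h
    · exfalso
      have h2 := hp i
      rw [hpdef i, ← h, div_zero] at h2
      exact lt_irrefl 0 h2
    · exact h
  have hTnonneg : 0 ≤ T := Finset.sum_nonneg fun m _ => sq_nonneg _
  have hTpos : 0 < T := by
    have h2 := hp i
    rw [hpdef i] at h2
    have := mul_pos h2 hG2pos
    rwa [div_mul_cancel₀ _ (ne_of_gt hG2pos)] at this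
  -- each Tn positive
  have hTn : ∀ n, (∑ m, (Tloc U lam g n m) ^ 2) = p n * G2 := by
    intro n
    rw [hpdef n]
    exact (div_mul_cancel₀ _ (ne_of_gt hG2pos)).symm
  have hTnpos : ∀ n, 0 < ∑ m, (Tloc U lam g n m) ^ 2 := fun n => by
    rw [hTn n]; exact mul_pos (hp n) hG2pos
  -- columns of U are unit vectors
  have hcol : ∀ ℓ : Fin N, ∑ n, (U n ℓ)^2 = 1 := by
    intro ℓ
    have := congrFun (congrFun hU ℓ) ℓ
    simpa [Matrix.mul_apply, Matrix.transpose_apply, Matrix.one_apply, sq] using this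
  -- probabilities sum to 1
  have hpsum : ∑ n, p n = 1 := by
    have : ∑ n, p n = (∑ n, ∑ ℓ, (g (lam ℓ))^2 * (U n ℓ)^2) / G2 := by
      rw [Finset.sum_div]
      exact Finset.sum_congr rfl fun n _ => by rw [hpdef n, hTeq n]
    rw [this, Finset.sum_comm]
    have : ∀ ℓ : Fin N, (∑ n, (g (lam ℓ))^2 * (U n ℓ)^2) = (g (lam ℓ))^2 := by
      intro ℓ; rw [← Finset.mul_sum, hcol, mul_one]
    rw [Finset.sum_congr rfl fun ℓ _ => this ℓ, ← hG2, div_self (ne_of_gt hG2pos)]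
  -- Cauchy–Schwarz bound
  have hCS : ∀ n, (Tloc U lam g i n)^2 ≤ (∑ m, (Tloc U lam g n m) ^ 2) * S := by
    intro n
    have hrestrict : Tloc U lam g i n = ∑ ℓ ∈ Ksupp, (g (lam ℓ) * U n ℓ) * (U i ℓ) := by
      rw [Tloc]
      rw [← Finset.sum_subset (Finset.subset_univ Ksupp)]
      · exact Finset.sum_congr rfl fun ℓ _ => by ring
      · intro ℓ _ hℓ
        have : g (lam ℓ) = 0 := by
          by_contra h; exact hℓ ((hK ℓ).mpr h)
        simp [this]
    rw [hrestrict]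
    refine le_trans (Finset.sum_mul_sq_le_sq_mul_sq Ksupp _ _) ?_
    rw [hS]
    refine mul_le_mul_of_nonneg_right ?_ (Finset.sum_nonneg fun ℓ _ => sq_nonneg _)
    rw [hTeq n]
    refine Finset.sum_le_sum_of_subset_of_nonneg (Finset.subset_univ Ksupp) ?_ |>.trans ?_
    · intro ℓ _ _; positivity
    · exact le_of_eq (Finset.sum_congr rfl fun ℓ _ => by rw [mul_pow])
  -- positivity of S
  have hSnonneg : 0 ≤ S := Finset.sum_nonneg fun ℓ _ => sq_nonneg _
  have hSpos : 0 < S := by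
    rcases eq_or_lt_of_le hSnonneg with h | h
    · exfalso
      have hT0 : T ≤ 0 := by
        rw [hT]
        refine Finset.sum_nonpos fun m _ => ?_
        have := hCS m
        rw [← h, mul_zero] at this
        exact this
      linarith
    · exact h
  -- T ≤ Gs * S
  have hGsT : T ≤ Gs * S := by
    have hbdd : ∀ ℓ : Fin N, (g (lam ℓ))^2 ≤ Gs := by
      intro ℓ
      rw [hGs]
      exact le_ciSup (Set.Finite.bddAbove (Set.finite_range (fun ℓ : Fin N => (g (lam ℓ))^2))) ℓ
    have hTres : T = ∑ ℓ ∈ Ksupp, (g (lam ℓ))^2 * (U i ℓ)^2 := by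
      rw [hT, hTeq i]
      rw [← Finset.sum_subset (Finset.subset_univ Ksupp)]
      intro ℓ _ hℓ
      have : g (lam ℓ) = 0 := by by_contra hc; exact hℓ ((hK ℓ).mpr hc)
      simp [this]
    rw [hTres, hS, Finset.mul_sum]
    exact Finset.sum_le_sum fun ℓ _ =>
      mul_le_mul_of_nonneg_right (hbdd ℓ) (sq_nonneg _)
  have hGspos : 0 < Gs := by
    by_contra hc
    push_neg at hc
    nlinarith [hGsT, hTpos, hSpos]
  -- Ksupp is nonempty
  have hKne : Ksupp.Nonempty := by
    obtain ⟨ℓ, -, hℓ⟩ := Finset.exists_ne_zero_of_sum_ne_zero (ne_of_gt hG2pos)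
    exact ⟨ℓ, (hK ℓ).mpr (by intro hc; simp [hc] at hℓ)⟩
  have hk1 : (1:ℝ) ≤ (Ksupp.card : ℝ) :=
    Nat.one_le_cast.mpr (Finset.card_pos.mpr hKne)
  -- log facts
  have hL : Real.log ε = - Real.log (1/ε) := by
    rw [one_div, Real.log_inv, neg_neg]
  have hLpos : 0 < Real.log (1/ε) :=
    Real.log_pos (by rw [one_div]; exact (one_lt_inv_iff₀.mpr ⟨hε, hε1⟩))
  have hLk : Real.log (1/ε) ≤ Real.log ((Ksupp.card : ℝ)/ε) :=
    Real.log_le_log (by positivity) ((div_le_div_iff_of_pos_right hε).mpr hk1)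
  -- abbreviations for estimator values
  set B : ℝ := G2 * S * T with hB
  have hBpos : 0 < B := by positivity
  -- mean of the estimator
  have hfE : ∑ n, p n * ((Tloc U lam g i n)^2 / p n) = T := by
    rw [hT]
    exact Finset.sum_congr rfl fun n _ => mul_div_cancel₀ _ (ne_of_gt (hp n))
  -- second moment bound
  have hfVar : ∑ n, p n * ((Tloc U lam g i n)^2 / p n)^2 ≤ B := by
    have hterm : ∀ n, p n * ((Tloc U lam g i n)^2 / p n)^2
        ≤ (G2 * S) * (Tloc U lam g i n)^2 := by
      intro n
      have hpne : p n ≠ 0 := ne_of_gt (hp n)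
      have heq : p n * ((Tloc U lam g i n)^2 / p n)^2
          = (Tloc U lam g i n)^2 * ((Tloc U lam g i n)^2 / p n) := by
        field_simp
      rw [heq]
      have hdiv : (Tloc U lam g i n)^2 / p n ≤ G2 * S := by
        rw [div_le_iff₀ (hp n)]
        have h1 := hCS n
        rw [hTn n] at h1
        exact h1.trans_eq (by ring)
      calc (Tloc U lam g i n)^2 * ((Tloc U lam g i n)^2 / p n)
          ≤ (Tloc U lam g i n)^2 * (G2 * S) :=
            mul_le_mul_of_nonneg_left hdiv (sq_nonneg _)
        _ = (G2 * S) * (Tloc U lam g i n)^2 := by ring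
    calc ∑ n, p n * ((Tloc U lam g i n)^2 / p n)^2
        ≤ ∑ n, (G2 * S) * (Tloc U lam g i n)^2 :=
          Finset.sum_le_sum fun n _ => hterm n
      _ = B := by rw [← Finset.mul_sum, ← hT, hB]
  -- key bound on M
  have hA12 : G2 * S / T ≤ G2 * Gs * S^2 / T^2 := by
    rw [div_le_div_iff₀ hTpos (by positivity)]
    nlinarith [hGsT, hG2pos, hSpos, hTpos]
  have hMb : 2/δ^2 * (G2 * S / T) * Real.log (1/ε) ≤ (M:ℝ) := by
    refine le_trans ?_ hM
    have h1 : 2/δ^2 * (G2 * S / T) * Real.log (1/ε)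
        ≤ 2/δ^2 * (G2 * Gs * S^2 / T^2) * Real.log (1/ε) := by
      exact mul_le_mul_of_nonneg_right (mul_le_mul_of_nonneg_left hA12 (by positivity)) hLpos.le
    refine h1.trans ?_
    have h2 : Real.log (1/ε) ≤ (1 + δ/3) * Real.log ((Ksupp.card:ℝ)/ε) :=
      hLk.trans (le_mul_of_one_le_left (hLpos.trans_le hLk).le (by linarith))
    calc 2/δ^2 * (G2 * Gs * S^2 / T^2) * Real.log (1/ε)
        ≤ 2/δ^2 * (G2 * Gs * S^2 / T^2) * ((1 + δ/3) * Real.log ((Ksupp.card:ℝ)/ε)) := by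
          refine mul_le_mul_of_nonneg_left h2 ?_
          refine mul_nonneg (by positivity) (div_nonneg ?_ (by positivity))
          exact mul_nonneg (mul_nonneg hG2pos.le hGspos.le) (by positivity)
      _ = 2/δ^2 * (G2 * Gs * S^2 / T^2) * (1 + δ/3) * Real.log ((Ksupp.card:ℝ)/ε) := by ring
  have hMpos : (0:ℝ) < (M:ℝ) :=
    lt_of_lt_of_le (mul_pos (mul_pos (by positivity) (by positivity)) hLpos) hMb
  have hMne : (M:ℝ) ≠ 0 := ne_of_gt hMpos
  have hMkey : 2 * B * Real.log (1/ε) ≤ (M:ℝ) * (δ^2 * T^2) := by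
    have := mul_le_mul_of_nonneg_right hMb (by positivity : (0:ℝ) ≤ δ^2 * T^2)
    refine le_trans (le_of_eq ?_) this
    field_simp
    ring
  -- Chernoff parameters
  set θ : ℝ := δ * T / B with hθ
  have hθpos : 0 < θ := by positivity
  set q : Fin N → ℝ := fun n => p n * Real.exp (-(θ * ((Tloc U lam g i n)^2 / p n))) with hq
  have hqnn : ∀ n, 0 ≤ q n := fun n => mul_nonneg (hp n).le (Real.exp_nonneg _)
  -- MGF bound
  have hqsum : ∑ n, q n ≤ Real.exp (θ^2 * B / 2 - θ * T) := by
    have hstep : ∀ n, q n ≤ p n * (1 - θ * ((Tloc U lam g i n)^2 / p n)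
        + (θ * ((Tloc U lam g i n)^2 / p n))^2 / 2) := by
      intro n
      refine mul_le_mul_of_nonneg_left ?_ (hp n).le
      exact exp_neg_le_quadratic _ (mul_nonneg hθpos.le (div_nonneg (sq_nonneg _) (hp n).le))
    have h1 : ∑ n, q n ≤ ∑ n, (p n - θ * (p n * ((Tloc U lam g i n)^2 / p n))
        + θ^2/2 * (p n * ((Tloc U lam g i n)^2 / p n)^2)) := by
      refine Finset.sum_le_sum fun n _ => (hstep n).trans (le_of_eq (by ring))
    rw [Finset.sum_add_distrib, Finset.sum_sub_distrib, ← Finset.mul_sum, ← Finset.mul_sum,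
      hpsum, hfE] at h1
    have h2 : (1:ℝ) - θ * T + θ^2/2 * (∑ n, p n * ((Tloc U lam g i n)^2 / p n)^2)
        ≤ 1 - θ * T + θ^2 * B / 2 := by nlinarith [hfVar]
    refine (h1.trans h2).trans ?_
    have := Real.add_one_le_exp (θ^2 * B / 2 - θ * T)
    linarith
  have hqsumnn : 0 ≤ ∑ n, q n := Finset.sum_nonneg fun n _ => hqnn n
  set c : ℝ := (1 - δ) * M * T with hc
  -- total probability is 1
  have htotal : ∑ ω : Fin M → Fin N, ∏ j, p (ω j) = 1 := by
    rw [sum_prod_pi_eq_pow, hpsum, one_pow]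
  have hsplit : (∑ ω : Fin M → Fin N,
        if ((1 / (M : ℝ)) * ∑ j, (Tloc U lam g i (ω j)) ^ 2 / p (ω j)) / T ≥ 1 - δ
          then ∏ j, p (ω j) else 0)
      = 1 - ∑ ω : Fin M → Fin N,
        if ¬ (((1 / (M : ℝ)) * ∑ j, (Tloc U lam g i (ω j)) ^ 2 / p (ω j)) / T ≥ 1 - δ)
          then ∏ j, p (ω j) else 0 := by
    have hadd : (∑ ω : Fin M → Fin N,
          if ((1 / (M : ℝ)) * ∑ j, (Tloc U lam g i (ω j)) ^ 2 / p (ω j)) / T ≥ 1 - δ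
            then ∏ j, p (ω j) else 0)
        + (∑ ω : Fin M → Fin N,
          if ¬ (((1 / (M : ℝ)) * ∑ j, (Tloc U lam g i (ω j)) ^ 2 / p (ω j)) / T ≥ 1 - δ)
            then ∏ j, p (ω j) else 0)
        = ∑ ω : Fin M → Fin N, ∏ j, p (ω j) := by
      rw [← Finset.sum_add_distrib]
      refine Finset.sum_congr rfl fun ω _ => ?_
      by_cases h : ((1 / (M : ℝ)) * ∑ j, (Tloc U lam g i (ω j)) ^ 2 / p (ω j)) / T ≥ 1 - δ
      · rw [if_pos h, if_neg (not_not_intro h), add_zero]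
      · rw [if_neg h, if_pos h, zero_add]
    rw [htotal] at hadd
    linarith
  rw [hsplit]
  have hF : (∑ ω : Fin M → Fin N,
        if ¬ (((1 / (M : ℝ)) * ∑ j, (Tloc U lam g i (ω j)) ^ 2 / p (ω j)) / T ≥ 1 - δ)
          then ∏ j, p (ω j) else 0) ≤ ε := by
    have hbound : ∀ ω : Fin M → Fin N,
        (if ¬ (((1 / (M : ℝ)) * ∑ j, (Tloc U lam g i (ω j)) ^ 2 / p (ω j)) / T ≥ 1 - δ)
          then ∏ j, p (ω j) else 0)
        ≤ Real.exp (θ * c) * ∏ j, q (ω j) := by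
      intro ω
      have hqprod : Real.exp (θ * c) * ∏ j, q (ω j)
          = Real.exp (θ * (c - ∑ j, (Tloc U lam g i (ω j))^2 / p (ω j)))
            * ∏ j, p (ω j) := by
        simp only [hq]
        rw [Finset.prod_mul_distrib, ← Real.exp_sum]
        have hsum : ∑ j, -(θ * ((Tloc U lam g i (ω j))^2 / p (ω j)))
            = -(θ * ∑ j, (Tloc U lam g i (ω j))^2 / p (ω j)) := by
          rw [Finset.mul_sum, ← Finset.sum_neg_distrib]
        rw [hsum, mul_comm (∏ j, p (ω j)) _, ← mul_assoc, ← Real.exp_add]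
        congr 1
        rw [mul_sub, sub_eq_add_neg]
      split_ifs with h
      · exact mul_nonneg (Real.exp_nonneg _) (Finset.prod_nonneg fun j _ => hqnn (ω j))
      · push_neg at h
        have h2 : (1 / (M:ℝ)) * ∑ j, (Tloc U lam g i (ω j))^2 / p (ω j) < (1-δ) * T :=
          (div_lt_iff₀ hTpos).mp h
        have hSig : ∑ j, (Tloc U lam g i (ω j))^2 / p (ω j) < c := by
          calc ∑ j, (Tloc U lam g i (ω j))^2 / p (ω j)
              = (M:ℝ) * ((1 / (M:ℝ)) * ∑ j, (Tloc U lam g i (ω j))^2 / p (ω j)) := by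
                field_simp
            _ < (M:ℝ) * ((1-δ) * T) := mul_lt_mul_of_pos_left h2 hMpos
            _ = c := by rw [hc]; ring
        rw [hqprod]
        refine le_mul_of_one_le_left (Finset.prod_nonneg fun j _ => (hp (ω j)).le) ?_
        exact Real.one_le_exp (mul_nonneg hθpos.le (by linarith))
    calc (∑ ω : Fin M → Fin N,
          if ¬ (((1 / (M : ℝ)) * ∑ j, (Tloc U lam g i (ω j)) ^ 2 / p (ω j)) / T ≥ 1 - δ)
            then ∏ j, p (ω j) else 0)
        ≤ ∑ ω : Fin M → Fin N, Real.exp (θ * c) * ∏ j, q (ω j) :=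
          Finset.sum_le_sum fun ω _ => hbound ω
      _ = Real.exp (θ * c) * (∑ n, q n)^M := by
          rw [← Finset.mul_sum, sum_prod_pi_eq_pow]
      _ ≤ Real.exp (θ * c) * (Real.exp (θ^2 * B / 2 - θ * T))^M :=
          mul_le_mul_of_nonneg_left (pow_le_pow_left₀ hqsumnn hqsum M) (Real.exp_nonneg _)
      _ = Real.exp (θ * c + M * (θ^2 * B / 2 - θ * T)) := by
          rw [← Real.exp_nat_mul, ← Real.exp_add]
      _ ≤ ε := by
          rw [← Real.exp_log hε, Real.exp_le_exp]
          have hexp : θ * c + M * (θ^2 * B / 2 - θ * T)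
              = -(((M:ℝ) * (δ^2 * T^2)) / (2 * B)) := by
            rw [hθ, hc]
            field_simp
            ring
          rw [hexp, hL, neg_le_neg_iff, le_div_iff₀ (by positivity : (0:ℝ) < 2 * B)]
          calc Real.log (1/ε) * (2 * B) = 2 * B * Real.log (1/ε) := by ring
            _ ≤ (M:ℝ) * (δ^2 * T^2) := hMkey
  linarith
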